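/- Let m ≥ q and let M ∈ ℝ^{m×q} have full column rank. Then there exists an invertible matrix T ∈ ℝ^{m×m} with condition number κ(T) = κ(M) such that T M has orthonormal columns, i.e., (TM)ᵀ(TM) = I_q. -/

import Mathlib

open Matrix


/-- Euclidean norm of a vector. -/
noncomputable def eunorm {ι : Type*} [Fintype ι] (v : ι → ℝ) : ℝ :=
  Real.sqrt (∑ i, (v i) ^ 2)

/-- Largest singular value (spectral norm) of a matrix. -/
noncomputable def smax {ι κ : Type*} [Fintype ι] [Fintype κ]
    (A : Matrix ι κ ℝ) : ℝ :=
  sSup {c | ∃ v : κ → ℝ, eunorm v = 1 ∧ c = eunorm (A.mulVec v)}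

/-- Smallest singular value of a matrix (of full column rank). -/
noncomputable def smin {ι κ : Type*} [Fintype ι] [Fintype κ]
    (A : Matrix ι κ ℝ) : ℝ :=
  sInf {c | ∃ v : κ → ℝ, eunorm v = 1 ∧ c = eunorm (A.mulVec v)}

/-- Condition number `κ(A) = σ_max(A) / σ_min(A)`. -/
noncomputable def condNum {ι κ : Type*} [Fintype ι] [Fintype κ]
    (A : Matrix ι κ ℝ) : ℝ := smax A / smin A

lemma eunorm_eq_sqrt_dot {ι : Type*} [Fintype ι] (v : ι → ℝ) :
    eunorm v = Real.sqrt (v ⬝ᵥ v) := by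
  simp [eunorm, dotProduct, sq]

lemma dot_mulVec_self {ι κ : Type*} [Fintype ι] [Fintype κ]
    (X : Matrix ι κ ℝ) (v : κ → ℝ) :
    (X *ᵥ v) ⬝ᵥ (X *ᵥ v) = v ⬝ᵥ (Xᵀ * X) *ᵥ v := by
  conv_rhs => rw [← mulVec_mulVec, dotProduct_mulVec, vecMul_transpose]

lemma eunorm_mulVec {ι κ : Type*} [Fintype ι] [Fintype κ]
    (X : Matrix ι κ ℝ) (v : κ → ℝ) :
    eunorm (X *ᵥ v) = Real.sqrt (v ⬝ᵥ (Xᵀ * X) *ᵥ v) := by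
  rw [eunorm_eq_sqrt_dot, dot_mulVec_self]

lemma smax_eq {ι κ : Type*} [Fintype ι] [Fintype κ] (A : Matrix ι κ ℝ) (b : ℝ)
    (hub : ∀ v : κ → ℝ, eunorm v = 1 → eunorm (A.mulVec v) ≤ b)
    (hmem : ∃ v : κ → ℝ, eunorm v = 1 ∧ eunorm (A.mulVec v) = b) : smax A = b := by
  obtain ⟨v, hv, he⟩ := hmem
  exact IsGreatest.csSup_eq ⟨⟨v, hv, he.symm⟩, by rintro x ⟨w, hw, rfl⟩; exact hub w hw⟩

lemma smin_eq {ι κ : Type*} [Fintype ι] [Fintype κ] (A : Matrix ι κ ℝ) (b : ℝ)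
    (hlb : ∀ v : κ → ℝ, eunorm v = 1 → b ≤ eunorm (A.mulVec v))
    (hmem : ∃ v : κ → ℝ, eunorm v = 1 ∧ eunorm (A.mulVec v) = b) : smin A = b := by
  obtain ⟨v, hv, he⟩ := hmem
  exact IsLeast.csInf_eq ⟨⟨v, hv, he.symm⟩, by rintro x ⟨w, hw, rfl⟩; exact hlb w hw⟩

lemma quad_diag {n : ℕ} (U : Matrix (Fin n) (Fin n) ℝ) (f : Fin n → ℝ) (y : Fin n → ℝ) :
    y ⬝ᵥ (U * diagonal f * Uᵀ) *ᵥ y = ∑ i, f i * ((Uᵀ *ᵥ y) i) ^ 2 := by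
  rw [← mulVec_mulVec, ← mulVec_mulVec, dotProduct_mulVec]
  have : y ᵥ* U = Uᵀ *ᵥ y := by rw [← vecMul_transpose, transpose_transpose]
  rw [this]
  simp [dotProduct, mulVec_diagonal, sq]
  ring_nf
  exact Finset.sum_congr rfl fun i _ => by ring

lemma quad_sandwich {m n : ℕ} (M : Matrix (Fin m) (Fin n) ℝ)
    (S : Matrix (Fin n) (Fin n) ℝ) (w : Fin m → ℝ) :
    w ⬝ᵥ (M * S * Mᵀ) *ᵥ w = (Mᵀ *ᵥ w) ⬝ᵥ S *ᵥ (Mᵀ *ᵥ w) := by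
  rw [← mulVec_mulVec, ← mulVec_mulVec, dotProduct_mulVec]
  have : w ᵥ* M = Mᵀ *ᵥ w := by rw [← vecMul_transpose, transpose_transpose]
  rw [this]

lemma Dmul {n : ℕ} (U : Matrix (Fin n) (Fin n) ℝ) (hU : Uᵀ * U = 1) (f g : Fin n → ℝ) :
    (U * diagonal f * Uᵀ) * (U * diagonal g * Uᵀ)
      = U * diagonal (fun i => f i * g i) * Uᵀ := by
  have : diagonal f * diagonal g = diagonal (fun i => f i * g i) := by
    rw [diagonal_mul_diagonal]
  calc (U * diagonal f * Uᵀ) * (U * diagonal g * Uᵀ)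
      = U * diagonal f * (Uᵀ * U) * diagonal g * Uᵀ := by simp only [mul_assoc]
    _ = U * (diagonal f * diagonal g) * Uᵀ := by rw [hU]; simp only [mul_one, mul_assoc]
    _ = _ := by rw [this]

lemma unit_col {m n : ℕ} (V : Matrix (Fin m) (Fin n) ℝ) (hV : Vᵀ * V = 1) (k : Fin n) :
    eunorm (V *ᵥ Pi.single k 1) = 1 := by
  rw [eunorm_eq_sqrt_dot, dot_mulVec_self, hV, one_mulVec]
  simp [dotProduct, Pi.single_apply]

lemma eunorm_one_sumsq {ι : Type*} [Fintype ι] {v : ι → ℝ} (h : eunorm v = 1) :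
    ∑ i, v i ^ 2 = 1 := by
  have h0 : 0 ≤ ∑ i, v i ^ 2 := Finset.sum_nonneg fun i _ => sq_nonneg _
  calc ∑ i, v i ^ 2 = (Real.sqrt (∑ i, v i ^ 2)) ^ 2 := (Real.sq_sqrt h0).symm
    _ = 1 := by rw [show Real.sqrt (∑ i, v i ^ 2) = eunorm v from rfl, h, one_pow]

lemma sumsq_transpose {n : ℕ} (U : Matrix (Fin n) (Fin n) ℝ) (hU : U * Uᵀ = 1)
    (v : Fin n → ℝ) : ∑ i, ((Uᵀ *ᵥ v) i) ^ 2 = ∑ i, v i ^ 2 := by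
  have h := dot_mulVec_self Uᵀ v
  rw [transpose_transpose, hU, one_mulVec] at h
  simpa [dotProduct, sq] using h
theorem exists_orthogonalizing_preconditioner (m q : ℕ) (hq : 0 < q) (hmq : q ≤ m)
    (M : Matrix (Fin m) (Fin q) ℝ) (hrank : M.rank = q) :
    ∃ T : Matrix (Fin m) (Fin m) ℝ, IsUnit T ∧ condNum T = condNum M ∧
      (T * M).transpose * (T * M) = 1 := by
  classical
  -- injectivity of mulVec
  have hinj : ∀ x : Fin q → ℝ, x ≠ 0 → M *ᵥ x ≠ 0 := by
    intro x hx h0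
    have h := LinearMap.finrank_range_add_finrank_ker M.mulVecLin
    rw [show Module.finrank ℝ (LinearMap.range M.mulVecLin) = q from hrank, Module.finrank_pi,
      Fintype.card_fin] at h
    have hker : LinearMap.ker M.mulVecLin = ⊥ := Submodule.finrank_eq_zero.mp (by omega)
    have hx' : x ∈ LinearMap.ker M.mulVecLin := LinearMap.mem_ker.mpr (by simpa using h0)
    exact hx ((Submodule.mem_bot ℝ).mp (hker ▸ hx'))
  have hAH : (Mᵀ * M).IsHermitian := by
    have h := isHermitian_conjTranspose_mul_self M
    rwa [conjTranspose_eq_transpose_of_trivial] at h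
  have hApd : (Mᵀ * M).PosDef := by
    refine PosDef.of_dotProduct_mulVec_pos hAH fun x hx => ?_
    have hsx : star x = x := by simp
    have h1 : star x ⬝ᵥ (Mᵀ * M) *ᵥ x = (M *ᵥ x) ⬝ᵥ (M *ᵥ x) := by
      rw [hsx, ← dot_mulVec_self]
    rw [h1]
    have h2 := hinj x hx
    rcases Function.ne_iff.mp h2 with ⟨i, hi⟩
    apply Finset.sum_pos' (fun j _ => mul_self_nonneg _)
    exact ⟨i, Finset.mem_univ i, mul_self_pos.mpr (by simpa using hi)⟩
  set eig : Fin q → ℝ := hAH.eigenvalues with heigdef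
  set U : Matrix (Fin q) (Fin q) ℝ := (hAH.eigenvectorUnitary : Matrix (Fin q) (Fin q) ℝ)
    with hUdef
  have heigpos : ∀ i, 0 < eig i := fun i => hApd.eigenvalues_pos i
  have hU1 : Uᵀ * U = 1 := by
    have := (hAH.eigenvectorUnitary).2
    rw [Unitary.mem_iff] at this
    simpa [Matrix.star_eq_conjTranspose] using this.1
  have hU2 : U * Uᵀ = 1 := by
    have := (hAH.eigenvectorUnitary).2
    rw [Unitary.mem_iff] at this
    simpa [Matrix.star_eq_conjTranspose] using this.2
  have hspec : Mᵀ * M = U * diagonal eig * Uᵀ := by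
    rw [hUdef, heigdef]
    simpa [Matrix.star_eq_conjTranspose, conjTranspose_eq_transpose_of_trivial] using hAH.spectral_theorem
  set e : Fin q → ℝ := fun i => Real.sqrt (eig i) with hedef
  have hepos : ∀ i, 0 < e i := fun i => Real.sqrt_pos.mpr (heigpos i)
  have hesq : ∀ i, e i ^ 2 = eig i := fun i => Real.sq_sqrt (heigpos i).le
  obtain ⟨kmax, -, hkmax⟩ := Finset.exists_max_image Finset.univ eig ⟨⟨0, hq⟩, Finset.mem_univ _⟩
  obtain ⟨kmin, -, hkmin⟩ := Finset.exists_min_image Finset.univ eig ⟨⟨0, hq⟩, Finset.mem_univ _⟩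
  have hkmax' : ∀ i, eig i ≤ eig kmax := fun i => hkmax i (Finset.mem_univ i)
  have hkmin' : ∀ i, eig kmin ≤ eig i := fun i => hkmin i (Finset.mem_univ i)
  -- matrices
  set P : Matrix (Fin m) (Fin m) ℝ :=
    M * (U * diagonal (fun i => (eig i)⁻¹) * Uᵀ) * Mᵀ with hPdef
  set T : Matrix (Fin m) (Fin m) ℝ :=
    M * (U * diagonal (fun i => ((e i) ^ 3)⁻¹) * Uᵀ) * Mᵀ + (e kmax)⁻¹ • (1 - P) with hTdef
  set T' : Matrix (Fin m) (Fin m) ℝ :=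
    M * (U * diagonal (fun i => (e i)⁻¹) * Uᵀ) * Mᵀ + (e kmax) • (1 - P) with hT'def
  have hDD : ∀ f g : Fin q → ℝ, (U * diagonal f * Uᵀ) * (U * diagonal g * Uᵀ)
      = U * diagonal (fun i => f i * g i) * Uᵀ := Dmul U hU1
  have hsand : ∀ X Y : Matrix (Fin q) (Fin q) ℝ,
      (M * X * Mᵀ) * (M * Y * Mᵀ) = M * (X * (U * diagonal eig * Uᵀ) * Y) * Mᵀ := by
    intro X Y
    rw [← hspec]
    simp only [Matrix.mul_assoc]
  have hDDD : ∀ f g : Fin q → ℝ,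
      (M * (U * diagonal f * Uᵀ) * Mᵀ) * (M * (U * diagonal g * Uᵀ) * Mᵀ)
        = M * (U * diagonal (fun i => f i * eig i * g i) * Uᵀ) * Mᵀ := by
    intro f g
    rw [hsand, hDD, hDD]
  have hDM : ∀ f : Fin q → ℝ, (M * (U * diagonal f * Uᵀ) * Mᵀ) * M
      = M * (U * diagonal (fun i => f i * eig i) * Uᵀ) := by
    intro f
    calc (M * (U * diagonal f * Uᵀ) * Mᵀ) * M
        = M * ((U * diagonal f * Uᵀ) * (Mᵀ * M)) := by simp only [Matrix.mul_assoc]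
      _ = M * ((U * diagonal f * Uᵀ) * (U * diagonal eig * Uᵀ)) := by rw [hspec]
      _ = _ := by rw [hDD, Matrix.mul_assoc]
  have hPM : P * M = M := by
    rw [hPdef, hDM]
    have h : (fun i => (eig i)⁻¹ * eig i) = fun _ : Fin q => (1:ℝ) :=
      funext fun i => inv_mul_cancel₀ (heigpos i).ne'
    rw [h, diagonal_one, mul_one, hU2, Matrix.mul_one]
  have hPP : P * P = P := by
    rw [hPdef, hDDD]
    have h : (fun i => (eig i)⁻¹ * eig i * (eig i)⁻¹) = fun i => (eig i)⁻¹ :=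
      funext fun i => by field_simp
    rw [h]
  have hDt : ∀ f : Fin q → ℝ, (M * (U * diagonal f * Uᵀ) * Mᵀ)ᵀ
      = M * (U * diagonal f * Uᵀ) * Mᵀ := by
    intro f
    simp [Matrix.transpose_mul, Matrix.mul_assoc]
  have hPt : Pᵀ = P := by rw [hPdef]; exact hDt _
  have hTt : Tᵀ = T := by
    rw [hTdef, transpose_add, transpose_smul, transpose_sub, transpose_one, hPt, hDt]
  -- master product expansion
  have hmaster : ∀ (f g : Fin q → ℝ) (x y : ℝ),
      (M * (U * diagonal f * Uᵀ) * Mᵀ + x • (1 - P)) *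
        (M * (U * diagonal g * Uᵀ) * Mᵀ + y • (1 - P))
      = M * (U * diagonal (fun i => f i * eig i * g i) * Uᵀ) * Mᵀ + (x * y) • (1 - P) := by
    intro f g x y
    have hfP : (M * (U * diagonal f * Uᵀ) * Mᵀ) * P = M * (U * diagonal f * Uᵀ) * Mᵀ := by
      rw [hPdef, hDDD]
      have h : (fun i => f i * eig i * (eig i)⁻¹) = f := funext fun i => by
        have := (heigpos i).ne'
        field_simp
      rw [h]
    have hPg : P * (M * (U * diagonal g * Uᵀ) * Mᵀ) = M * (U * diagonal g * Uᵀ) * Mᵀ := by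
      calc P * (M * (U * diagonal g * Uᵀ) * Mᵀ)
          = (P * M) * ((U * diagonal g * Uᵀ) * Mᵀ) := by simp only [Matrix.mul_assoc]
        _ = M * (U * diagonal g * Uᵀ) * Mᵀ := by rw [hPM]; simp only [Matrix.mul_assoc]
    have e2 : (M * (U * diagonal f * Uᵀ) * Mᵀ) * (y • (1 - P)) = 0 := by
      rw [mul_smul_comm, mul_sub, mul_one, hfP, sub_self, smul_zero]
    have e3 : (x • (1 - P)) * (M * (U * diagonal g * Uᵀ) * Mᵀ) = 0 := by
      rw [smul_mul_assoc, sub_mul, one_mul, hPg, sub_self, smul_zero]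
    have e4 : (x • (1 - P)) * (y • (1 - P)) = (x * y) • (1 - P) := by
      rw [smul_mul_assoc, mul_smul_comm, smul_smul]
      congr 1
      rw [sub_mul, one_mul, mul_sub, mul_one, hPP, sub_self, sub_zero]
    rw [add_mul, mul_add, mul_add, hDDD, e2, e3, e4, add_zero, zero_add]
  -- T * T' = 1
  have hTT' : T * T' = 1 := by
    rw [hTdef, hT'def, hmaster]
    have h1 : (fun i => ((e i) ^ 3)⁻¹ * eig i * (e i)⁻¹) = fun i => (eig i)⁻¹ := by
      funext i
      rw [← hesq i]
      have := (hepos i).ne'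
      field_simp
    rw [h1, inv_mul_cancel₀ (hepos kmax).ne', one_smul, ← hPdef, add_sub_cancel]
  -- T * T
  have hT2 : T * T = M * (U * diagonal (fun i => ((e i) ^ 4)⁻¹) * Uᵀ) * Mᵀ
      + (eig kmax)⁻¹ • (1 - P) := by
    rw [hTdef, hmaster]
    have h1 : (fun i => ((e i) ^ 3)⁻¹ * eig i * ((e i) ^ 3)⁻¹) = fun i => ((e i) ^ 4)⁻¹ := by
      funext i
      rw [← hesq i]
      have := (hepos i).ne'
      field_simp
    have h2 : (e kmax)⁻¹ * (e kmax)⁻¹ = (eig kmax)⁻¹ := by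
      rw [← hesq kmax, ← mul_inv, sq]
    rw [h1, h2]
  -- T * M
  have hTM : T * M = M * (U * diagonal (fun i => (e i)⁻¹) * Uᵀ) := by
    rw [hTdef, Matrix.add_mul, hDM, Matrix.smul_mul, Matrix.sub_mul, Matrix.one_mul, hPM,
      sub_self, smul_zero, add_zero]
    have h1 : (fun i => ((e i) ^ 3)⁻¹ * eig i) = fun i => (e i)⁻¹ := by
      funext i
      rw [← hesq i]
      have := (hepos i).ne'
      field_simp
    rw [h1]
  have hXt : ∀ f : Fin q → ℝ, (U * diagonal f * Uᵀ)ᵀ = U * diagonal f * Uᵀ := by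
    intro f
    simp [Matrix.transpose_mul, Matrix.mul_assoc]
  -- orthonormal columns
  have hgoal3 : (T * M)ᵀ * (T * M) = 1 := by
    rw [hTM, transpose_mul, hXt]
    calc (U * diagonal (fun i => (e i)⁻¹) * Uᵀ) * Mᵀ * (M * (U * diagonal (fun i => (e i)⁻¹) * Uᵀ))
        = (U * diagonal (fun i => (e i)⁻¹) * Uᵀ) *
            ((Mᵀ * M) * (U * diagonal (fun i => (e i)⁻¹) * Uᵀ)) := by
          simp only [Matrix.mul_assoc]
      _ = (U * diagonal (fun i => (e i)⁻¹) * Uᵀ) *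
            ((U * diagonal eig * Uᵀ) * (U * diagonal (fun i => (e i)⁻¹) * Uᵀ)) := by rw [hspec]
      _ = 1 := by
          rw [hDD, hDD]
          have h1 : (fun i => (e i)⁻¹ * (eig i * (e i)⁻¹)) = fun _ : Fin q => (1 : ℝ) := by
            funext i
            rw [← hesq i]
            have := (hepos i).ne'
            field_simp
          rw [h1, diagonal_one, mul_one, hU2]
  -- quadratic forms
  have hww : ∀ w : Fin m → ℝ, eunorm w = 1 → w ⬝ᵥ w = 1 := by
    intro w hw
    simpa [dotProduct, sq] using eunorm_one_sumsq hw
  have hdotP : ∀ w : Fin m → ℝ,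
      w ⬝ᵥ P *ᵥ w = ∑ i, (eig i)⁻¹ * ((Uᵀ *ᵥ (Mᵀ *ᵥ w)) i) ^ 2 := by
    intro w
    rw [hPdef, quad_sandwich, quad_diag]
  have hPle : ∀ w : Fin m → ℝ, w ⬝ᵥ P *ᵥ w ≤ w ⬝ᵥ w := by
    intro w
    have h2 : (1 - P)ᵀ * (1 - P) = 1 - P := by
      rw [transpose_sub, transpose_one, hPt, sub_mul, one_mul, mul_sub, mul_one, hPP,
        sub_self, sub_zero]
    have h1 : 0 ≤ w ⬝ᵥ (1 - P) *ᵥ w := by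
      have h3 := dot_mulVec_self (1 - P) w
      rw [h2] at h3
      rw [← h3]
      exact Finset.sum_nonneg fun i _ => mul_self_nonneg _
    have h4 : w ⬝ᵥ (1 - P) *ᵥ w = w ⬝ᵥ w - w ⬝ᵥ P *ᵥ w := by
      rw [sub_mulVec, one_mulVec, dotProduct_sub]
    linarith
  -- spectral values of M
  have hsmaxM : smax M = Real.sqrt (eig kmax) := by
    apply smax_eq
    · intro v hv
      rw [eunorm_mulVec, hspec, quad_diag]
      apply Real.sqrt_le_sqrt
      calc ∑ i, eig i * ((Uᵀ *ᵥ v) i) ^ 2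
          ≤ ∑ i, eig kmax * ((Uᵀ *ᵥ v) i) ^ 2 :=
            Finset.sum_le_sum fun i _ => mul_le_mul_of_nonneg_right (hkmax' i) (sq_nonneg _)
        _ = eig kmax := by
            rw [← Finset.mul_sum, sumsq_transpose U hU2, eunorm_one_sumsq hv, mul_one]
    · refine ⟨U *ᵥ Pi.single kmax 1, unit_col U hU1 kmax, ?_⟩
      rw [eunorm_mulVec, hspec, quad_diag]
      congr 1
      have h5 : Uᵀ *ᵥ (U *ᵥ Pi.single kmax 1) = Pi.single kmax 1 := by
        rw [mulVec_mulVec, hU1, one_mulVec]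
      rw [h5]
      rw [Finset.sum_eq_single kmax]
      · simp
      · intro i _ hi
        simp [Pi.single_apply, hi]
      · simp
  have hsminM : smin M = Real.sqrt (eig kmin) := by
    apply smin_eq
    · intro v hv
      rw [eunorm_mulVec, hspec, quad_diag]
      apply Real.sqrt_le_sqrt
      calc (eig kmin : ℝ)
          = ∑ i, eig kmin * ((Uᵀ *ᵥ v) i) ^ 2 := by
            rw [← Finset.mul_sum, sumsq_transpose U hU2, eunorm_one_sumsq hv, mul_one]
        _ ≤ ∑ i, eig i * ((Uᵀ *ᵥ v) i) ^ 2 :=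
            Finset.sum_le_sum fun i _ => mul_le_mul_of_nonneg_right (hkmin' i) (sq_nonneg _)
    · refine ⟨U *ᵥ Pi.single kmin 1, unit_col U hU1 kmin, ?_⟩
      rw [eunorm_mulVec, hspec, quad_diag]
      congr 1
      have h5 : Uᵀ *ᵥ (U *ᵥ Pi.single kmin 1) = Pi.single kmin 1 := by
        rw [mulVec_mulVec, hU1, one_mulVec]
      rw [h5]
      rw [Finset.sum_eq_single kmin]
      · simp
      · intro i _ hi
        simp [Pi.single_apply, hi]
      · simp
  -- quadratic form of T*T
  have hdotT : ∀ w : Fin m → ℝ, w ⬝ᵥ (T * T) *ᵥ w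
      = ∑ i, ((e i) ^ 4)⁻¹ * ((Uᵀ *ᵥ (Mᵀ *ᵥ w)) i) ^ 2
        + (eig kmax)⁻¹ * (w ⬝ᵥ w - w ⬝ᵥ P *ᵥ w) := by
    intro w
    rw [hT2, add_mulVec, dotProduct_add, quad_sandwich, quad_diag, smul_mulVec,
      dotProduct_smul, sub_mulVec, one_mulVec, dotProduct_sub, smul_eq_mul]
  have he4 : ∀ i, ((e i) ^ 4)⁻¹ = (eig i)⁻¹ * (eig i)⁻¹ := by
    intro i
    rw [← hesq i, ← mul_inv, ← pow_add]
  have hinvle : ∀ i, (eig i)⁻¹ ≤ (eig kmin)⁻¹ := fun i =>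
    one_div (eig i) ▸ one_div (eig kmin) ▸ one_div_le_one_div_of_le (heigpos kmin) (hkmin' i)
  have hinvge : ∀ i, (eig kmax)⁻¹ ≤ (eig i)⁻¹ := fun i =>
    one_div (eig kmax) ▸ one_div (eig i) ▸ one_div_le_one_div_of_le (heigpos i) (hkmax' i)
  -- bounds for T
  have hTbound : ∀ w : Fin m → ℝ, eunorm w = 1 →
      (eig kmax)⁻¹ ≤ w ⬝ᵥ (T * T) *ᵥ w ∧ w ⬝ᵥ (T * T) *ᵥ w ≤ (eig kmin)⁻¹ := by
    intro w hw
    rw [hdotT w, hww w hw, hdotP w]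
    set z : Fin q → ℝ := Uᵀ *ᵥ (Mᵀ *ᵥ w) with hzdef
    have hs0 : (0:ℝ) ≤ ∑ i, (eig i)⁻¹ * (z i) ^ 2 :=
      Finset.sum_nonneg fun i _ => mul_nonneg (inv_nonneg.mpr (heigpos i).le) (sq_nonneg _)
    have hs1 : ∑ i, (eig i)⁻¹ * (z i) ^ 2 ≤ 1 := by
      have := hPle w
      rw [hdotP w, hww w hw] at this
      exact this
    constructor
    · have hterm : (eig kmax)⁻¹ * (∑ i, (eig i)⁻¹ * (z i) ^ 2)
          ≤ ∑ i, ((e i) ^ 4)⁻¹ * (z i) ^ 2 := by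
        rw [Finset.mul_sum]
        refine Finset.sum_le_sum fun i _ => ?_
        rw [he4 i, mul_assoc]
        exact mul_le_mul_of_nonneg_right (hinvge i)
          (mul_nonneg (inv_nonneg.mpr (heigpos i).le) (sq_nonneg _))
      have hexp : (eig kmax)⁻¹ * (1 - ∑ i, (eig i)⁻¹ * (z i) ^ 2)
          = (eig kmax)⁻¹ - (eig kmax)⁻¹ * (∑ i, (eig i)⁻¹ * (z i) ^ 2) := by ring
      rw [hexp]
      linarith [hterm]
    · have hterm : ∑ i, ((e i) ^ 4)⁻¹ * (z i) ^ 2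
          ≤ (eig kmin)⁻¹ * (∑ i, (eig i)⁻¹ * (z i) ^ 2) := by
        rw [Finset.mul_sum]
        refine Finset.sum_le_sum fun i _ => ?_
        rw [he4 i, mul_assoc]
        exact mul_le_mul_of_nonneg_right (hinvle i)
          (mul_nonneg (inv_nonneg.mpr (heigpos i).le) (sq_nonneg _))
      have hc : (eig kmax)⁻¹ ≤ (eig kmin)⁻¹ := hinvle kmax
      have h6 : (eig kmax)⁻¹ * (1 - ∑ i, (eig i)⁻¹ * (z i) ^ 2)
          ≤ (eig kmin)⁻¹ * (1 - ∑ i, (eig i)⁻¹ * (z i) ^ 2) :=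
        mul_le_mul_of_nonneg_right hc (by linarith)
      have h7 : (eig kmin)⁻¹ * (∑ i, (eig i)⁻¹ * (z i) ^ 2)
          + (eig kmin)⁻¹ * (1 - ∑ i, (eig i)⁻¹ * (z i) ^ 2) = (eig kmin)⁻¹ := by ring
      linarith [hterm]
  -- the matrix V of eigenvectors of T*T on the range of M
  set V : Matrix (Fin m) (Fin q) ℝ := M * (U * diagonal (fun i => (e i)⁻¹)) with hVdef
  have hMMr : ∀ X : Matrix (Fin q) (Fin q) ℝ, Mᵀ * (M * X) = U * (diagonal eig * (Uᵀ * X)) := by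
    intro X
    rw [← Matrix.mul_assoc, hspec]
    simp only [Matrix.mul_assoc]
  have hUUr : ∀ X : Matrix (Fin q) (Fin q) ℝ, Uᵀ * (U * X) = X := by
    intro X
    rw [← Matrix.mul_assoc, hU1, one_mul]
  have hVtV : Vᵀ * V = 1 := by
    rw [hVdef, transpose_mul, transpose_mul, diagonal_transpose]
    simp only [Matrix.mul_assoc]
    rw [hMMr, hUUr, hUUr, diagonal_mul_diagonal, diagonal_mul_diagonal]
    have h1 : (fun i => (e i)⁻¹ * (eig i * (e i)⁻¹)) = fun _ : Fin q => (1:ℝ) := by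
      funext i
      rw [← hesq i]
      have := (hepos i).ne'
      field_simp
    rw [h1, diagonal_one]
  have hTTV : (T * T) * V = V * diagonal (fun i => (eig i)⁻¹) := by
    rw [hT2, Matrix.add_mul]
    have h1 : P * V = V := by
      rw [hVdef, ← Matrix.mul_assoc, hPM]
    have h2 : ((eig kmax)⁻¹ • (1 - P)) * V = 0 := by
      rw [Matrix.smul_mul, Matrix.sub_mul, Matrix.one_mul, h1, sub_self, smul_zero]
    rw [h2, add_zero, hVdef, ← Matrix.mul_assoc]
    have h3 : M * (U * diagonal (fun i => ((e i) ^ 4)⁻¹) * Uᵀ) * Mᵀ * M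
        = M * (U * diagonal (fun i => ((e i) ^ 4)⁻¹ * eig i) * Uᵀ) := hDM _
    rw [h3]
    -- now : M * (U * diag(e^-4*eig) * Uᵀ) * (U * diag(e⁻¹)) = M * (U * diag(e⁻¹)) * diag(eig⁻¹)
    simp only [Matrix.mul_assoc]
    rw [hUUr]
    rw [diagonal_mul_diagonal, diagonal_mul_diagonal]
    have hfix : (fun i => (e i ^ 4)⁻¹ * eig i * (e i)⁻¹) = fun i => (e i)⁻¹ * (eig i)⁻¹ := by
      funext i
      rw [← hesq i]
      have := (hepos i).ne'
      field_simp
    rw [hfix]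
  have hwitT : ∀ k : Fin q, eunorm (T *ᵥ (V *ᵥ Pi.single k 1)) = Real.sqrt ((eig k)⁻¹) := by
    intro k
    rw [eunorm_mulVec, hTt]
    congr 1
    have hdiag : (diagonal (fun i => (eig i)⁻¹)) *ᵥ Pi.single k 1
        = (eig k)⁻¹ • (Pi.single k (1:ℝ) : Fin q → ℝ) := by
      funext i
      rcases eq_or_ne i k with rfl | hik
      · simp [mulVec_diagonal]
      · simp [mulVec_diagonal, Pi.single_apply, hik]
    have h1 : (T * T) *ᵥ (V *ᵥ Pi.single k 1) = (eig k)⁻¹ • (V *ᵥ Pi.single k 1) := by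
      rw [mulVec_mulVec, hTTV, ← mulVec_mulVec, hdiag, mulVec_smul]
    rw [h1, dotProduct_smul, smul_eq_mul]
    have h2 : (V *ᵥ Pi.single k 1) ⬝ᵥ (V *ᵥ Pi.single k 1) = 1 := by
      rw [dot_mulVec_self, hVtV, one_mulVec]
      simp [dotProduct, Pi.single_apply]
    rw [h2, mul_one]
  have hsmaxT : smax T = Real.sqrt ((eig kmin)⁻¹) := by
    apply smax_eq
    · intro w hw
      rw [eunorm_mulVec, hTt]
      exact Real.sqrt_le_sqrt (hTbound w hw).2
    · exact ⟨V *ᵥ Pi.single kmin 1, unit_col V hVtV kmin, hwitT kmin⟩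
  have hsminT : smin T = Real.sqrt ((eig kmax)⁻¹) := by
    apply smin_eq
    · intro w hw
      rw [eunorm_mulVec, hTt]
      exact Real.sqrt_le_sqrt (hTbound w hw).1
    · exact ⟨V *ᵥ Pi.single kmax 1, unit_col V hVtV kmax, hwitT kmax⟩
  refine ⟨T, ⟨⟨T, T', hTT', mul_eq_one_comm.mp hTT'⟩, rfl⟩, ?_, hgoal3⟩
  rw [condNum, condNum, hsmaxT, hsminT, hsmaxM, hsminM, Real.sqrt_inv, Real.sqrt_inv,
    inv_div_inv]
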